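/- Let S₁ and S₂ be Steiner bundles of type (E, F) on a smooth projective variety X, i.e., there are short exact sequences 0 → E^{a_i} → F^{b_i} → S_i → 0 for i = 1,2, where (E, F) is a strongly exceptional pair of vector bundles. Then Ext^p(S₁, S₂) = 0 for all p ≥ 2. -/
import Mathlib


open CategoryTheory Limits

namespace SteinerAux

open CategoryTheory.Abelian

universe w' v' u'

variable {C : Type u'} [Category.{v'} C] [Abelian C] [HasExt.{w'} C]

lemma mk₀_add {X Y : C} (f g : X ⟶ Y) :
    Ext.mk₀ (f + g) = Ext.mk₀ f + Ext.mk₀ g := by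
  letI := HasDerivedCategory.standard C
  apply Ext.homEquiv.injective
  change (Ext.mk₀ (f + g)).hom = (Ext.mk₀ f + Ext.mk₀ g).hom
  rw [Ext.add_hom, Ext.mk₀_hom, Ext.mk₀_hom, Ext.mk₀_hom, Functor.map_add]
  simp [ShiftedHom.mk₀, Preadditive.add_comp]

/-- `mk₀` as an additive map. -/
noncomputable def mk₀Hom (X Y : C) : (X ⟶ Y) →+ Ext X Y 0 :=
  AddMonoidHom.mk' Ext.mk₀ mk₀_add

lemma ext_biproduct_left {ι : Type} [Fintype ι] (f : ι → C) [HasBiproduct f] (Y : C) (p : ℕ)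
    (h : ∀ i, Subsingleton (Ext (f i) Y p)) :
    Subsingleton (Ext (⨁ f) Y p) := by
  constructor
  suffices hz : ∀ x : Ext (⨁ f) Y p, x = 0 by
    intro x y; rw [hz x, hz y]
  intro x
  have h1 : x = (Ext.mk₀ (𝟙 (⨁ f))).comp x (zero_add p) := (Ext.mk₀_id_comp x).symm
  rw [h1, ← biproduct.total]
  have h2 : Ext.mk₀ (∑ j : ι, biproduct.π f j ≫ biproduct.ι f j)
      = ∑ j : ι, Ext.mk₀ (biproduct.π f j ≫ biproduct.ι f j) :=
    map_sum (mk₀Hom _ _) _ _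
  rw [h2]
  have h4 : (∑ j : ι, Ext.mk₀ (biproduct.π f j ≫ biproduct.ι f j)).comp x (zero_add p)
      = ∑ j : ι, (Ext.mk₀ (biproduct.π f j ≫ biproduct.ι f j)).comp x (zero_add p) :=
    map_sum (x.postcomp _ (zero_add p)) _ _
  rw [h4]
  apply Finset.sum_eq_zero
  intro j _
  have h3 : (Ext.mk₀ (biproduct.ι f j)).comp x (zero_add p) = 0 :=
    Subsingleton.elim _ _
  change (Ext.mk₀ (biproduct.π f j ≫ biproduct.ι f j)).comp x (zero_add p) = 0
  rw [← Ext.mk₀_comp_mk₀_assoc, h3, Ext.comp_zero]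

lemma ext_biproduct_right {ι : Type} [Fintype ι] (X : C) (f : ι → C) [HasBiproduct f] (p : ℕ)
    (h : ∀ i, Subsingleton (Ext X (f i) p)) :
    Subsingleton (Ext X (⨁ f) p) := by
  constructor
  suffices hz : ∀ x : Ext X (⨁ f) p, x = 0 by
    intro x y; rw [hz x, hz y]
  intro x
  have h1 : x = x.comp (Ext.mk₀ (𝟙 (⨁ f))) (add_zero p) := (Ext.comp_mk₀_id x).symm
  rw [h1, ← biproduct.total]
  have h2 : Ext.mk₀ (∑ j : ι, biproduct.π f j ≫ biproduct.ι f j)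
      = ∑ j : ι, Ext.mk₀ (biproduct.π f j ≫ biproduct.ι f j) :=
    map_sum (mk₀Hom _ _) _ _
  rw [h2]
  have h4 : x.comp (∑ j : ι, Ext.mk₀ (biproduct.π f j ≫ biproduct.ι f j)) (add_zero p)
      = ∑ j : ι, x.comp (Ext.mk₀ (biproduct.π f j ≫ biproduct.ι f j)) (add_zero p) :=
    map_sum (x.precomp _ (add_zero p)) _ _
  rw [h4]
  apply Finset.sum_eq_zero
  intro j _
  have h3 : x.comp (Ext.mk₀ (biproduct.π f j)) (add_zero p) = 0 :=
    Subsingleton.elim _ _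
  change x.comp (Ext.mk₀ (biproduct.π f j ≫ biproduct.ι f j)) (add_zero p) = 0
  rw [← Ext.mk₀_comp_mk₀, ← Ext.comp_assoc_of_third_deg_zero, h3, Ext.zero_comp]

end SteinerAux

/-- Let `(E, F)` be a strongly exceptional pair of vector bundles on a smooth projective
variety (both simple, `Ext^p(E,E) = Ext^p(F,F) = 0` for `p ≥ 1`, `Ext^p(F,E) = 0` for all
`p ≥ 0`, and `Ext^p(E,F) = 0` for `p ≠ 0`), and let `S₁`, `S₂` be Steiner bundles of type
`(E, F)`, given by short exact sequences `0 → E^{aᵢ} → F^{bᵢ} → Sᵢ → 0` for `i = 1, 2`.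
Then `Ext^p(S₁, S₂) = 0` for all `p ≥ 2`. -/
theorem steiner_ext_vanishing
    {κ : Type*} [Field κ]
    {𝒞 : Type u} [Category.{v} 𝒞] [Abelian 𝒞] [Linear κ 𝒞]
    [HasFiniteBiproducts 𝒞] [HasExt.{w} 𝒞]
    (E F : 𝒞)
    (hEsimple : ∀ f : E ⟶ E, ∃ c : κ, f = c • 𝟙 E)
    (hFsimple : ∀ f : F ⟶ F, ∃ c : κ, f = c • 𝟙 F)
    (hEE : ∀ p : ℕ, 1 ≤ p → Subsingleton (Abelian.Ext E E p))
    (hFF : ∀ p : ℕ, 1 ≤ p → Subsingleton (Abelian.Ext F F p))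
    (hFE0 : ∀ f : F ⟶ E, f = 0)
    (hFE : ∀ p : ℕ, 1 ≤ p → Subsingleton (Abelian.Ext F E p))
    (hEF : ∀ p : ℕ, 1 ≤ p → Subsingleton (Abelian.Ext E F p))
    (a₁ b₁ a₂ b₂ : ℕ) (ha₁ : 1 ≤ a₁) (hb₁ : 1 ≤ b₁) (ha₂ : 1 ≤ a₂) (hb₂ : 1 ≤ b₂)
    (S₁ S₂ : 𝒞)
    (α₁ : (⨁ fun _ : Fin a₁ => E) ⟶ (⨁ fun _ : Fin b₁ => F))
    (π₁ : (⨁ fun _ : Fin b₁ => F) ⟶ S₁)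
    (w₁ : α₁ ≫ π₁ = 0) [Mono α₁] [Epi π₁]
    (hex₁ : (ShortComplex.mk α₁ π₁ w₁).Exact)
    (α₂ : (⨁ fun _ : Fin a₂ => E) ⟶ (⨁ fun _ : Fin b₂ => F))
    (π₂ : (⨁ fun _ : Fin b₂ => F) ⟶ S₂)
    (w₂ : α₂ ≫ π₂ = 0) [Mono α₂] [Epi π₂]
    (hex₂ : (ShortComplex.mk α₂ π₂ w₂).Exact) :
    ∀ p : ℕ, 2 ≤ p → Subsingleton (Abelian.Ext S₁ S₂ p) := by
  have hS₁ : (ShortComplex.mk α₁ π₁ w₁).ShortExact := ⟨hex₁⟩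
  have hS₂ : (ShortComplex.mk α₂ π₂ w₂).ShortExact := ⟨hex₂⟩
  -- Step 1 : Ext^q(E, S₂) = 0 for q ≥ 1
  have hES₂ : ∀ q : ℕ, 1 ≤ q → Subsingleton (Abelian.Ext E S₂ q) := by
    intro q hq
    constructor
    suffices hz : ∀ x : Abelian.Ext E S₂ q, x = 0 by intro x y; rw [hz x, hz y]
    intro x
    have hEa : Subsingleton (Abelian.Ext E (⨁ fun _ : Fin a₂ => E) (q + 1)) :=
      SteinerAux.ext_biproduct_right E _ _ (fun _ => hEE (q + 1) (by omega))
    have hδ : x.comp hS₂.extClass rfl = 0 := Subsingleton.elim _ _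
    obtain ⟨x₂, hx₂⟩ := Abelian.Ext.covariant_sequence_exact₃ E hS₂ x rfl hδ
    have hFb : Subsingleton (Abelian.Ext E (⨁ fun _ : Fin b₂ => F) q) :=
      SteinerAux.ext_biproduct_right E _ _ (fun _ => hEF q hq)
    have hx₂0 : x₂ = 0 := Subsingleton.elim _ _
    rw [← hx₂, hx₂0, Abelian.Ext.zero_comp]
  -- Step 2 : Ext^q(F, S₂) = 0 for q ≥ 1
  have hFS₂ : ∀ q : ℕ, 1 ≤ q → Subsingleton (Abelian.Ext F S₂ q) := by
    intro q hq
    constructor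
    suffices hz : ∀ x : Abelian.Ext F S₂ q, x = 0 by intro x y; rw [hz x, hz y]
    intro x
    have hEa : Subsingleton (Abelian.Ext F (⨁ fun _ : Fin a₂ => E) (q + 1)) :=
      SteinerAux.ext_biproduct_right F _ _ (fun _ => hFE (q + 1) (by omega))
    have hδ : x.comp hS₂.extClass rfl = 0 := Subsingleton.elim _ _
    obtain ⟨x₂, hx₂⟩ := Abelian.Ext.covariant_sequence_exact₃ F hS₂ x rfl hδ
    have hFb : Subsingleton (Abelian.Ext F (⨁ fun _ : Fin b₂ => F) q) :=
      SteinerAux.ext_biproduct_right F _ _ (fun _ => hFF q hq)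
    have hx₂0 : x₂ = 0 := Subsingleton.elim _ _
    rw [← hx₂, hx₂0, Abelian.Ext.zero_comp]
  -- Step 3 : conclude
  intro p hp
  obtain ⟨q, rfl⟩ := Nat.exists_eq_add_of_le hp
  constructor
  suffices hz : ∀ x : Abelian.Ext S₁ S₂ (2 + q), x = 0 by intro x y; rw [hz x, hz y]
  intro x
  have hFb : Subsingleton (Abelian.Ext (⨁ fun _ : Fin b₁ => F) S₂ (2 + q)) :=
    SteinerAux.ext_biproduct_left _ S₂ _ (fun _ => hFS₂ (2 + q) (by omega))
  have hg : (Abelian.Ext.mk₀ π₁).comp x (zero_add (2 + q)) = 0 := Subsingleton.elim _ _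
  obtain ⟨x₁, hx₁⟩ := Abelian.Ext.contravariant_sequence_exact₃ hS₁ S₂ x hg
    (n₀ := 1 + q) (by omega)
  have hEa : Subsingleton (Abelian.Ext (⨁ fun _ : Fin a₁ => E) S₂ (1 + q)) :=
    SteinerAux.ext_biproduct_left _ S₂ _ (fun _ => hES₂ (1 + q) (by omega))
  have hx₁0 : x₁ = 0 := Subsingleton.elim _ _
  rw [← hx₁, hx₁0, Abelian.Ext.comp_zero]
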